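/- Let G be a group acting by homeomorphisms on a compact metric space X. If there exists a finite subset F ⊆ G and an expansive constant ε > 0 for the action such that F ε-codes all of G, then X is finite. -/

import Mathlib

theorem stmt_1 {G X : Type*} [Group G] [MetricSpace X] [CompactSpace X]
    [MulAction G X] (hc : ∀ g : G, Continuous fun x : X => g • x)
    (ε : ℝ) (hε : 0 < ε)
    (hexp : ∀ x y : X, x ≠ y → ∃ g : G, ε < dist (g • x) (g • y))
    (F : Finset G)
    (hcode : ∀ x y : X, (∀ h ∈ F, dist (h • x) (h • y) ≤ ε) →
      ∀ g : G, dist (g • x) (g • y) < ε) :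
    Finite X := by
  have hdisc : DiscreteTopology X := by
    rw [discreteTopology_iff_isOpen_singleton]
    intro x
    have hsep : ∀ y : X, y ≠ x → ∃ h ∈ F, ε < dist (h • x) (h • y) := by
      intro y hyx
      by_contra hno
      push_neg at hno
      have h1 : ∀ h ∈ F, dist (h • x) (h • y) ≤ ε := fun h hh => hno h hh
      obtain ⟨g, hg⟩ := hexp x y (fun e => hyx e.symm)
      exact absurd (hcode x y h1 g) (not_lt.mpr hg.le)
    have heq : {x} = ⋂ h ∈ F, {y : X | dist (h • x) (h • y) < ε} := by
      ext y
      simp only [Set.mem_singleton_iff, Set.mem_iInter, Set.mem_setOf_eq]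
      constructor
      · rintro rfl h _
        simpa using hε
      · intro hy
        by_contra hyx
        obtain ⟨h, hF, hlt⟩ := hsep y hyx
        exact absurd (hy h hF) (not_lt.mpr hlt.le)
    rw [heq]
    exact isOpen_biInter_finset fun h _ =>
      isOpen_lt (Continuous.dist continuous_const (hc h)) continuous_const
  exact finite_of_compact_of_discrete
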